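/- Let p ≥ 2 and k ≥ 1 be integers, and realize F(p) and F(p^k) as groups of piecewise-linear homeomorphisms of [0,1], so that F(p^k) ⊆ F(p). Then the map Φ_p carries F(p) into F(p), and for every x ∈ F(p^k) one has Φ_{p^k}(x) = Φ_p^{∘k}(x), the k-fold iterate of Φ_p applied to x. (Equivalently, the natural inclusion i : F(p^k) → F(p) satisfies i ∘ φ_{p^k}^{p^k−1} = φ_p^{k(p−1)} ∘ i for the shift maps.) -/

import Mathlib

open scoped BigOperators

/-- Relators of Thompson's group `F(p)`: `x_i⁻¹ x_j x_i x_{j+p-1}⁻¹` for `i < j`. -/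
def thompsonRels (p : ℕ) : Set (FreeGroup ℕ) :=
  { rel | ∃ i j : ℕ, i < j ∧
      rel = (FreeGroup.of i)⁻¹ * FreeGroup.of j * FreeGroup.of i *
        (FreeGroup.of (j + p - 1))⁻¹ }

/-- Thompson's group `F(p)`, presented with generators `x_i` (`i : ℕ`) and relations
`x_i⁻¹ · x_j · x_i = x_{j+p-1}` for `i < j`. -/
def FP (p : ℕ) : Type := PresentedGroup (thompsonRels p)

instance (p : ℕ) : Group (FP p) :=
  inferInstanceAs (Group (PresentedGroup (thompsonRels p)))

/-- The generator `x_i` of `F(p)`. -/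
def xg (p : ℕ) (i : ℕ) : FP p := PresentedGroup.of (rels := thompsonRels p) i

/-- Word length of `x : G` with respect to a set `S` of generators: the least length of a
word in elements of `S ∪ S⁻¹` whose product is `x`. -/
noncomputable def wordLength {G : Type*} [Group G] (S : Set G) (x : G) : ℕ :=
  sInf { n : ℕ | ∃ w : List G, w.length = n ∧ (∀ g ∈ w, g ∈ S ∨ g⁻¹ ∈ S) ∧ w.prod = x }

/-- The word length `|x|_p` on `F(p)`, with respect to the generators `x_0, …, x_{p-1}`. -/
noncomputable def wlen (p : ℕ) (x : FP p) : ℕ :=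
  wordLength { g : FP p | ∃ i, i < p ∧ g = xg p i } x

/-- The data of a candidate normal form
`x_{i₁}^{r₁} ⋯ x_{iₙ}^{rₙ} · x_{jₘ}^{-sₘ} ⋯ x_{j₁}^{-s₁}` in `F(p)`. -/
structure NFData (p : ℕ) where
  n : ℕ
  m : ℕ
  i : Fin n → ℕ
  r : Fin n → ℕ
  j : Fin m → ℕ
  s : Fin m → ℕ

namespace NFData

variable {p : ℕ}

/-- The element of `F(p)` represented by the normal form data, namely
`x_{i₁}^{r₁} ⋯ x_{iₙ}^{rₙ} · (x_{j₁}^{s₁} ⋯ x_{jₘ}^{sₘ})⁻¹`. -/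
def elem (d : NFData p) : FP p :=
  (List.ofFn fun k => xg p (d.i k) ^ d.r k).prod *
    ((List.ofFn fun l => xg p (d.j l) ^ d.s l).prod)⁻¹

/-- The generator with index `a` occurs in `d` (with positive or negative exponent). -/
def Occurs (d : NFData p) (a : ℕ) : Prop :=
  (∃ k, d.i k = a) ∨ (∃ l, d.j l = a)

/-- `d` is a normal form of `x ∈ F(p)`: the indices are strictly increasing, the exponents
are at least `1`, `iₙ ≠ jₘ` when both parts are nonempty, whenever a generator and its
inverse both occur one of the following `p-1` generators (or its inverse) occurs as well,
and the corresponding product equals `x`. -/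
def IsNormalFormOf (d : NFData p) (x : FP p) : Prop :=
  StrictMono d.i ∧ StrictMono d.j ∧
    (∀ k, 1 ≤ d.r k) ∧ (∀ l, 1 ≤ d.s l) ∧
    (∀ (hn : 0 < d.n) (hm : 0 < d.m),
      d.i ⟨d.n - 1, Nat.sub_lt hn Nat.one_pos⟩ ≠ d.j ⟨d.m - 1, Nat.sub_lt hm Nat.one_pos⟩) ∧
    (∀ a : ℕ, (∃ k, d.i k = a) → (∃ l, d.j l = a) →
      ∃ b : ℕ, a < b ∧ b ≤ a + p - 1 ∧ d.Occurs b) ∧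
    x = d.elem

/-- The quantity `D(x) = r₁ + ⋯ + rₙ + s₁ + ⋯ + sₘ + iₙ + jₘ` (the terms `iₙ`, `jₘ` being
omitted when `n = 0`, resp. `m = 0`). -/
def D (d : NFData p) : ℕ :=
  (∑ k, d.r k) + (∑ l, d.s l) +
    (if hn : 0 < d.n then d.i ⟨d.n - 1, Nat.sub_lt hn Nat.one_pos⟩ else 0) +
    (if hm : 0 < d.m then d.j ⟨d.m - 1, Nat.sub_lt hm Nat.one_pos⟩ else 0)

end NFData

/-- The tail sum `r_k + r_{k+1} + ⋯ + r_n`. -/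
def tailSum {n : ℕ} (r : Fin n → ℕ) (k : Fin n) : ℕ :=
  ∑ l ∈ Finset.univ.filter (fun l => k ≤ l), r l
/-- `N(x)` associated to a normal form in `F(2)` (Theorem 3):
the maximum of `i_k + r_k + ⋯ + r_n + 1` and `j_l + s_l + ⋯ + s_m + 1`. -/
def NFData.N2 (d : NFData 2) : ℕ :=
  max (Finset.univ.sup fun k => d.i k + tailSum d.r k + 1)
      (Finset.univ.sup fun l => d.j l + tailSum d.s l + 1)

/-- `N(x)` associated to a normal form in `F(p)` (Theorem 6):
the maximum of `⌊i_k/(p-1)⌋ + r_k + ⋯ + r_n + 1` and `⌊j_l/(p-1)⌋ + s_l + ⋯ + s_m + 1`. -/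
def NFData.Ngen {p : ℕ} (d : NFData p) : ℕ :=
  max (Finset.univ.sup fun k => d.i k / (p - 1) + tailSum d.r k + 1)
      (Finset.univ.sup fun l => d.j l / (p - 1) + tailSum d.s l + 1)

/-- `N(x) = max { i_k + r_k + ⋯ + r_n + 1 }` for a positive word (Proposition 2). -/
def posN {n : ℕ} (i r : Fin n → ℕ) : ℕ :=
  Finset.univ.sup fun k => i k + tailSum r k + 1

/-- `N₁(x) = max { ⌊i_k/(p-1)⌋ + r_k + ⋯ + r_n + 1 }` (Proposition 4). -/
def posN1 (p : ℕ) {n : ℕ} (i r : Fin n → ℕ) : ℕ :=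
  Finset.univ.sup fun k => i k / (p - 1) + tailSum r k + 1

/-- `N₂(x) = max { i_k + (p-1)(r_k + ⋯ + r_n) + 1 }` (Proposition 5). -/
def posN2 (p : ℕ) {n : ℕ} (i r : Fin n → ℕ) : ℕ :=
  Finset.univ.sup fun k => i k + (p - 1) * tailSum r k + 1

/-- `x ∈ ℤ[1/p]`. -/
def IsPAdicRational (p : ℕ) (x : ℝ) : Prop :=
  ∃ (a : ℤ) (n : ℕ), x = (a : ℝ) / (p : ℝ) ^ n

/-- Thompson's group `F(p)` realized as a set of permutations of `ℝ`: orientation-preserving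
piecewise-linear homeomorphisms of `[0,1]` (extended by the identity outside `[0,1]`) with
finitely many breakpoints, all in `ℤ[1/p]`, whose slopes are integer powers of `p`. -/
def PLSet (p : ℕ) : Set (Equiv.Perm ℝ) :=
  { f | Monotone f ∧ (∀ t : ℝ, t ≤ 0 → f t = t) ∧ (∀ t : ℝ, 1 ≤ t → f t = t) ∧
    ∃ B : Finset ℝ, (∀ b ∈ B, IsPAdicRational p b) ∧
      ∀ t : ℝ, t ∉ (B : Set ℝ) →
        ∃ ε > (0 : ℝ), ∃ (k : ℤ) (c : ℝ), ∀ s : ℝ, |s - t| < ε → f s = (p : ℝ) ^ k * s + c }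

/-- The map `Φ_p` on homeomorphisms: `(Φ_p f)(t) = t` for `t ≤ 1 - 1/p`, and
`(Φ_p f)(t) = ((p-1) + f(pt - (p-1)))/p` for `t ≥ 1 - 1/p`. -/
noncomputable def PhiMap (p : ℕ) (f : ℝ → ℝ) : ℝ → ℝ := fun t =>
  if t ≤ 1 - 1 / (p : ℝ) then t
  else (((p : ℝ) - 1) + f ((p : ℝ) * t - ((p : ℝ) - 1))) / (p : ℝ)

/-- The piecewise-linear homeomorphism `f_i` of `ℝ` corresponding to the generator `x_i`
of `F(p)`. -/
noncomputable def fgen (p : ℕ) (i : ℕ) : ℝ → ℝ := fun t =>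
  if t ≤ (i : ℝ) then t
  else if t ≤ (i : ℝ) + 1 then (p : ℝ) * t + (i : ℝ) * (1 - (p : ℝ))
  else t + (p : ℝ) - 1

section Aux

lemma phiMap_mul (p q : ℕ) (hp : 2 ≤ p) (hq : 2 ≤ q) (f : ℝ → ℝ) :
    PhiMap p (PhiMap q f) = PhiMap (p * q) f := by
  have hP : (2:ℝ) ≤ (p:ℝ) := by exact_mod_cast hp
  have hQ : (2:ℝ) ≤ (q:ℝ) := by exact_mod_cast hq
  have hP0 : (0:ℝ) < (p:ℝ) := by linarith
  have hQ0 : (0:ℝ) < (q:ℝ) := by linarith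
  have hPQ0 : (0:ℝ) < (p:ℝ) * (q:ℝ) := mul_pos hP0 hQ0
  have hQinv : (q:ℝ) * (1/(q:ℝ)) = 1 := by field_simp
  have hPQinv : ((p:ℝ)*(q:ℝ)) * (1/((p:ℝ)*(q:ℝ))) = 1 := by field_simp
  have hiff : ∀ t : ℝ, ((p:ℝ) * t - ((p:ℝ) - 1) ≤ 1 - 1/(q:ℝ)) ↔ t ≤ 1 - 1/((p:ℝ)*(q:ℝ)) := by
    intro t
    constructor
    · intro h
      have key : (p:ℝ)*(q:ℝ)*t ≤ (p:ℝ)*(q:ℝ) - 1 := by nlinarith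
      nlinarith [mul_le_mul_of_nonneg_left key (le_of_lt hPQ0)]
    · intro h
      have key : (p:ℝ)*(q:ℝ)*t ≤ (p:ℝ)*(q:ℝ) - 1 := by nlinarith
      nlinarith
  funext t
  simp only [PhiMap, Nat.cast_mul]
  by_cases h1 : t ≤ 1 - 1 / (p:ℝ)
  · have h2 : t ≤ 1 - 1 / ((p:ℝ) * (q:ℝ)) := by
      have hle : 1/((p:ℝ)*(q:ℝ)) ≤ 1/(p:ℝ) := by
        apply one_div_le_one_div_of_le hP0
        nlinarith
      linarith
    rw [if_pos h1, if_pos h2]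
  · push_neg at h1
    by_cases h3 : (p:ℝ) * t - ((p:ℝ) - 1) ≤ 1 - 1/(q:ℝ)
    · have h2 : t ≤ 1 - 1 / ((p:ℝ)*(q:ℝ)) := (hiff t).mp h3
      rw [if_neg (not_le.mpr h1), if_pos h3, if_pos h2]
      field_simp
      ring
    · have h2 : ¬ t ≤ 1 - 1 / ((p:ℝ)*(q:ℝ)) := fun h => h3 ((hiff t).mpr h)
      rw [if_neg (not_le.mpr h1), if_neg h3, if_neg h2]
      have harg : (q:ℝ)*((p:ℝ)*t-((p:ℝ)-1)) - ((q:ℝ)-1)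
          = (p:ℝ)*(q:ℝ)*t - ((p:ℝ)*(q:ℝ)-1) := by ring
      rw [harg]
      field_simp
      ring

lemma phiMap_pow_eq (p k : ℕ) (hp : 2 ≤ p) (hk : 1 ≤ k) (f : ℝ → ℝ) :
    PhiMap (p ^ k) f = (PhiMap p)^[k] f := by
  induction k, hk using Nat.le_induction with
  | base => simp [pow_one]
  | succ k hk ih =>
    have h2 : 2 ≤ p ^ k := le_trans hp (Nat.le_self_pow (by omega) p)
    rw [pow_succ, mul_comm, ← phiMap_mul p (p^k) hp h2 f, ih,
      Function.iterate_succ_apply']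

lemma PLSet_pow_subset (p k : ℕ) (hp : 2 ≤ p) : PLSet (p ^ k) ⊆ PLSet p := by
  intro f hf
  obtain ⟨hmono, h0, h1, B, hB, hloc⟩ := hf
  refine ⟨hmono, h0, h1, B, ?_, ?_⟩
  · intro b hb
    obtain ⟨a, n, hab⟩ := hB b hb
    refine ⟨a, k*n, ?_⟩
    rw [hab, Nat.cast_pow, ← pow_mul]
  · intro t ht
    obtain ⟨ε, hε, j, c, hloc'⟩ := hloc t ht
    refine ⟨ε, hε, (k:ℤ)*j, c, fun s hs => ?_⟩
    rw [hloc' s hs, Nat.cast_pow, ← zpow_natCast ((p:ℝ)) k, ← zpow_mul]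

section Phi

variable {p : ℕ}

lemma phi_inv_aux (hp : 2 ≤ p) (f : Equiv.Perm ℝ) (hmono : Monotone ⇑f)
    (h0 : ∀ t : ℝ, t ≤ 0 → f t = t) (t : ℝ) :
    PhiMap p ⇑f.symm (PhiMap p ⇑f t) = t := by
  have hP : (2:ℝ) ≤ (p:ℝ) := by exact_mod_cast hp
  have hP0 : (0:ℝ) < (p:ℝ) := by linarith
  have hsm : StrictMono ⇑f := hmono.strictMono_of_injective f.injective
  have hf0 : f 0 = 0 := h0 0 le_rfl
  have hPinv : (p:ℝ) * (1/(p:ℝ)) = 1 := by field_simp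
  by_cases h1 : t ≤ 1 - 1/(p:ℝ)
  · have hstep : PhiMap p ⇑f t = t := by simp only [PhiMap]; rw [if_pos h1]
    rw [hstep]
    simp only [PhiMap]
    rw [if_pos h1]
  · push_neg at h1
    have hs0 : 0 < (p:ℝ)*t - ((p:ℝ)-1) := by nlinarith [hPinv]
    have hfs : 0 < f ((p:ℝ)*t - ((p:ℝ)-1)) := by
      rw [← hf0]; exact hsm hs0
    have hval : PhiMap p ⇑f t = (((p:ℝ)-1) + f ((p:ℝ)*t - ((p:ℝ)-1)))/(p:ℝ) := by
      simp only [PhiMap]; rw [if_neg (not_le.mpr h1)]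
    have hgt : 1 - 1/(p:ℝ) < (((p:ℝ)-1) + f ((p:ℝ)*t - ((p:ℝ)-1)))/(p:ℝ) := by
      rw [lt_div_iff₀ hP0]; nlinarith [hPinv]
    rw [hval]
    simp only [PhiMap, if_neg (not_le.mpr hgt)]
    have harg : (p:ℝ) * ((((p:ℝ)-1) + f ((p:ℝ)*t - ((p:ℝ)-1)))/(p:ℝ)) - ((p:ℝ)-1)
        = f ((p:ℝ)*t - ((p:ℝ)-1)) := by field_simp; ring
    rw [harg, Equiv.symm_apply_apply]
    field_simp
    ring

lemma phi_mem (hp : 2 ≤ p) (f : Equiv.Perm ℝ) (hf : f ∈ PLSet p) :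
    ∃ g ∈ PLSet p, ⇑g = PhiMap p ⇑f := by
  obtain ⟨hmono, h0, h1, B, hB, hloc⟩ := hf
  have hP : (2:ℝ) ≤ (p:ℝ) := by exact_mod_cast hp
  have hP0 : (0:ℝ) < (p:ℝ) := by linarith
  have hPinv : (p:ℝ) * (1/(p:ℝ)) = 1 := by field_simp
  have hsm : StrictMono ⇑f := hmono.strictMono_of_injective f.injective
  have hf0 : f 0 = 0 := h0 0 le_rfl
  have hsymm_mono : Monotone ⇑f.symm := by
    intro a b hab
    by_contra h
    push_neg at h
    have h2 := hsm h
    simp only [Equiv.apply_symm_apply] at h2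
    exact absurd hab (not_le.mpr h2)
  have hsymm0 : ∀ t : ℝ, t ≤ 0 → f.symm t = t := by
    intro t ht
    exact (Equiv.symm_apply_eq f).mpr (h0 t ht).symm
  refine ⟨⟨PhiMap p ⇑f, PhiMap p ⇑f.symm,
    phi_inv_aux hp f hmono h0,
    phi_inv_aux hp f.symm hsymm_mono hsymm0⟩, ?_, rfl⟩
  have hcoe : ⇑(⟨PhiMap p ⇑f, PhiMap p ⇑f.symm,
      phi_inv_aux hp f hmono h0,
      phi_inv_aux hp f.symm hsymm_mono hsymm0⟩ : Equiv.Perm ℝ) = PhiMap p ⇑f := rfl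
  rw [PLSet, Set.mem_setOf_eq]
  show Monotone (PhiMap p ⇑f) ∧ _
  refine ⟨?_, ?_, ?_, ?_⟩
  · -- monotone
    intro a b hab
    simp only [PhiMap]
    split_ifs with ha hb hb
    · exact hab
    · push_neg at hb
      have hfb : 0 ≤ f ((p:ℝ)*b - ((p:ℝ)-1)) := by
        rw [← hf0]; exact hmono (by nlinarith)
      rw [le_div_iff₀ hP0]
      nlinarith
    · exact absurd (hab.trans hb) ha
    · have hx : f ((p:ℝ)*a - ((p:ℝ)-1)) ≤ f ((p:ℝ)*b - ((p:ℝ)-1)) :=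
        hmono (by nlinarith)
      rw [div_le_div_iff₀ hP0 hP0]
      nlinarith [hP0]
  · -- t ≤ 0
    intro t ht
    have hle : t ≤ 1 - 1/(p:ℝ) := by nlinarith [hPinv]
    simp only [Equiv.coe_fn_mk, PhiMap]
    rw [if_pos hle]
  · -- 1 ≤ t
    intro t ht
    have hgt : ¬ t ≤ 1 - 1/(p:ℝ) := by
      push_neg
      nlinarith [hPinv]
    have harg : (1:ℝ) ≤ (p:ℝ)*t - ((p:ℝ)-1) := by nlinarith
    simp only [Equiv.coe_fn_mk, PhiMap]
    rw [if_neg hgt, h1 _ harg]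
    field_simp
    ring
  · -- breakpoints
    refine ⟨insert (1 - 1/(p:ℝ)) (B.image fun b => (b + ((p:ℝ)-1))/(p:ℝ)), ?_, ?_⟩
    · intro b hb
      rcases Finset.mem_insert.mp hb with hb | hb
      · refine ⟨(p:ℤ) - 1, 1, ?_⟩
        subst hb
        push_cast
        field_simp
      · obtain ⟨b', hb', rfl⟩ := Finset.mem_image.mp hb
        obtain ⟨a, n, hab⟩ := hB b' hb'
        refine ⟨a + ((p:ℤ)-1)*(p:ℤ)^n, n+1, ?_⟩
        rw [hab]
        push_cast
        have hne : (p:ℝ) ≠ 0 := ne_of_gt hP0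
        field_simp
        ring
    · intro t htB
      have ht1 : t ≠ 1 - 1/(p:ℝ) := fun h => htB (by rw [h]; exact Finset.mem_insert_self _ _)
      rcases lt_or_gt_of_ne ht1 with hlt | hgt
      · refine ⟨1 - 1/(p:ℝ) - t, by linarith, 0, 0, fun s hs => ?_⟩
        have hs' : s ≤ 1 - 1/(p:ℝ) := by
          have := abs_lt.mp hs
          linarith [this.2]
        simp only [Equiv.coe_fn_mk, PhiMap]
        rw [if_pos hs']
        simp
      · have hu : (p:ℝ)*t - ((p:ℝ)-1) ∉ (B : Set ℝ) := by
          intro hu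
          apply htB
          apply Finset.mem_insert_of_mem
          apply Finset.mem_image.mpr
          refine ⟨_, hu, ?_⟩
          field_simp
          ring
        obtain ⟨ε, hε, j, c, hloc'⟩ := hloc _ hu
        refine ⟨min (ε/(p:ℝ)) (t - (1 - 1/(p:ℝ))),
          lt_min (by positivity) (by linarith), j,
          (((p:ℝ)-1)*(1 - (p:ℝ)^j) + c)/(p:ℝ), fun s hs => ?_⟩
        have habs := abs_lt.mp hs
        have hmin1 := lt_of_lt_of_le hs (min_le_left _ _)
        have hmin2 := lt_of_lt_of_le hs (min_le_right _ _)
        have hs1 : ¬ s ≤ 1 - 1/(p:ℝ) := by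
          push_neg
          have := abs_lt.mp hmin2
          linarith [this.1]
        have hsarg : |((p:ℝ)*s - ((p:ℝ)-1)) - ((p:ℝ)*t - ((p:ℝ)-1))| < ε := by
          have heq : ((p:ℝ)*s - ((p:ℝ)-1)) - ((p:ℝ)*t - ((p:ℝ)-1)) = (p:ℝ)*(s-t) := by ring
          rw [heq, abs_mul, abs_of_pos hP0]
          calc (p:ℝ) * |s - t| < (p:ℝ) * (ε/(p:ℝ)) := by
                exact (mul_lt_mul_iff_right₀ hP0).mpr hmin1
            _ = ε := by field_simp
        simp only [Equiv.coe_fn_mk, PhiMap]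
        rw [if_neg hs1, hloc' _ hsarg]
        field_simp
        ring

end Phi

end Aux

/-- Proposition 11. For `p ≥ 2`, `k ≥ 1`, realizing `F(p)` and `F(p^k)`
as groups of piecewise-linear homeomorphisms (so `F(p^k) ⊆ F(p)`): the map `Φ_p` carries
`F(p)` into `F(p)`, and for every `x ∈ F(p^k)` one has `Φ_{p^k}(x) = Φ_p^{∘k}(x)`. -/
theorem statement12 (p k : ℕ) (hp : 2 ≤ p) (hk : 1 ≤ k) :
    PLSet (p ^ k) ⊆ PLSet p ∧
      (∀ f ∈ PLSet p, ∃ g ∈ PLSet p, ⇑g = PhiMap p ⇑f) ∧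
      ∀ x ∈ PLSet (p ^ k), PhiMap (p ^ k) ⇑x = (PhiMap p)^[k] ⇑x := by
  refine ⟨PLSet_pow_subset p k hp, fun f hf => phi_mem hp f hf, fun x hx => ?_⟩
  exact phiMap_pow_eq p k hp hk ⇑x
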